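/- Let H, U be real Hilbert spaces, A : D(A) ⊂ H → H with ⟨Ay, y⟩ ≤ ω‖y‖² for all y ∈ D(A) (ω ≥ 0), B ∈ L(U,H) with ‖B*y‖ ≥ β‖y‖ (β > 0), and η ∈ H with ‖η‖ ≤ M. Then for every y ∈ D(A) with y ≠ 0, ⟨Ay − (ω/β²)B B* y − ρ B(B*y/‖B*y‖) + η, y⟩ ≤ −(ρβ − M)‖y‖. -/

import Mathlib

open scoped RealInnerProductSpace

theorem lyapunov_derivative_estimate
    {H U : Type*} [NormedAddCommGroup H] [InnerProductSpace ℝ H] [CompleteSpace H]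
    [NormedAddCommGroup U] [InnerProductSpace ℝ U] [CompleteSpace U]
    (D : Submodule ℝ H) (A : D →ₗ[ℝ] H) (B : U →L[ℝ] H)
    (ω β ρ M : ℝ) (hω : 0 ≤ ω) (hβ : 0 < β) (hρ : 0 < ρ)
    (hA : ∀ y : D, ⟪A y, (y : H)⟫ ≤ ω * ‖(y : H)‖ ^ 2)
    (hcoerc : ∀ y : H, β * ‖y‖ ≤ ‖(ContinuousLinearMap.adjoint B) y‖)
    (η : H) (hη : ‖η‖ ≤ M) :
    ∀ y : D, (y : H) ≠ 0 →
      ⟪A y - (ω / β ^ 2) • B ((ContinuousLinearMap.adjoint B) (y : H))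
        - ρ • B ((‖(ContinuousLinearMap.adjoint B) (y : H)‖)⁻¹ •
            (ContinuousLinearMap.adjoint B) (y : H)) + η, (y : H)⟫
        ≤ -(ρ * β - M) * ‖(y : H)‖ := by
  intro y hy
  set z := (ContinuousLinearMap.adjoint B) (y : H) with hz
  have hzpos : 0 < ‖z‖ := by
    have := hcoerc (y : H)
    have hny : 0 < ‖(y : H)‖ := norm_pos_iff.mpr hy
    nlinarith
  have hBz : ∀ u : U, ⟪B u, (y : H)⟫ = (inner ℝ u z : ℝ) := by
    intro u
    simp only [hz, ContinuousLinearMap.adjoint_inner_right]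
  have key : ⟪A y - (ω / β ^ 2) • B z - ρ • B ((‖z‖)⁻¹ • z) + η, (y : H)⟫
      = ⟪A y, (y : H)⟫ - (ω / β ^ 2) * ‖z‖ ^ 2 - ρ * ‖z‖ + ⟪η, (y : H)⟫ := by
    rw [inner_add_left, inner_sub_left, inner_sub_left, inner_smul_left,
      inner_smul_left, hBz, hBz, real_inner_smul_left, real_inner_self_eq_norm_sq]
    simp only [starRingEnd_apply, star_trivial]
    field_simp
  rw [key]
  have h1 : ⟪A y, (y : H)⟫ ≤ ω * ‖(y : H)‖ ^ 2 := hA y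
  have h2 : β * ‖(y : H)‖ ≤ ‖z‖ := hcoerc (y : H)
  have h3 : ⟪η, (y : H)⟫ ≤ M * ‖(y : H)‖ := by
    calc ⟪η, (y : H)⟫ ≤ ‖η‖ * ‖(y : H)‖ := real_inner_le_norm _ _
      _ ≤ M * ‖(y : H)‖ := by
        have := norm_nonneg (y : H); nlinarith
  have hβ2 : β ^ 2 * ‖(y : H)‖ ^ 2 ≤ ‖z‖ ^ 2 := by
    have := pow_le_pow_left₀ (by positivity : (0:ℝ) ≤ β * ‖(y : H)‖) h2 2
    nlinarith [this]
  have hdiv : ω * ‖(y : H)‖ ^ 2 ≤ (ω / β ^ 2) * ‖z‖ ^ 2 := by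
    rw [div_mul_eq_mul_div, le_div_iff₀ (by positivity)]
    nlinarith
  nlinarith
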